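/- Fix a > 0 and c ∈ [−1, 1]. For η ≠ 0 define f(η) = g(η/a)/η, where g(t) = log(α(t) − β(t)·c) − log D(t) with α(t) = 1 + sinh(at)/a, β(t) = (cosh(at) − 1)/a, and D(t) = 1 + (2/a)·sinh(at) + (2/a²)·(cosh(at) − 1). Then as η → 0, f(η) = −3/(2a) + η/(2a²) + (1/(2a))·(cosh η − sinh η·c) + O(η²); that is, the function η ↦ f(η) + 3/(2a) − η/(2a²) − (1/(2a))·(cosh η − sinh η·c) is O(η²) as η → 0. In particular, the coefficient of the energy E = cosh η − sinh η·c in f at η = 0 is β_eff = 1/(2a), the effective inverse temperature. -/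

import Mathlib

noncomputable section

open Real Filter Asymptotics Topology Set

namespace Stmt19Aux

def Af (a c η : ℝ) : ℝ := 1 + Real.sinh η / a - (Real.cosh η - 1) / a * c
def Df (a η : ℝ) : ℝ := 1 + 2 / a * Real.sinh η + 2 / a ^ 2 * (Real.cosh η - 1)
def A1 (a c η : ℝ) : ℝ := Real.cosh η / a - Real.sinh η / a * c
def A2 (a c η : ℝ) : ℝ := Real.sinh η / a - Real.cosh η / a * c
def D1 (a η : ℝ) : ℝ := 2 / a * Real.cosh η + 2 / a ^ 2 * Real.sinh η
def D2 (a η : ℝ) : ℝ := 2 / a * Real.sinh η + 2 / a ^ 2 * Real.cosh η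

def G (a c η : ℝ) : ℝ :=
  Real.log (Af a c η) - Real.log (Df a η) + η * (3 / (2 * a)) - η ^ 2 / (2 * a ^ 2) -
    η * ((Real.cosh η - Real.sinh η * c) / (2 * a))

def G1 (a c η : ℝ) : ℝ :=
  A1 a c η / Af a c η - D1 a η / Df a η + 3 / (2 * a) - η / a ^ 2 -
    ((Real.cosh η - Real.sinh η * c) / (2 * a) + η * ((Real.sinh η - Real.cosh η * c) / (2 * a)))

def G2 (a c η : ℝ) : ℝ :=
  (A2 a c η * Af a c η - A1 a c η ^ 2) / Af a c η ^ 2 -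
    (D2 a η * Df a η - D1 a η ^ 2) / Df a η ^ 2 - 1 / a ^ 2 -
    ((Real.sinh η - Real.cosh η * c) / (2 * a) +
      ((Real.sinh η - Real.cosh η * c) / (2 * a) + η * ((Real.cosh η - Real.sinh η * c) / (2 * a))))

lemma hasDerivAt_Af (a c η : ℝ) : HasDerivAt (Af a c) (A1 a c η) η := by
  unfold Af A1
  exact (((Real.hasDerivAt_sinh η).div_const a).const_add 1).sub
    ((((Real.hasDerivAt_cosh η).sub_const 1).div_const a).mul_const c)

lemma hasDerivAt_Df (a η : ℝ) : HasDerivAt (Df a) (D1 a η) η := by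
  unfold Df D1
  exact (((Real.hasDerivAt_sinh η).const_mul (2 / a)).const_add 1).add
    (((Real.hasDerivAt_cosh η).sub_const 1).const_mul (2 / a ^ 2))

lemma hasDerivAt_A1 (a c η : ℝ) : HasDerivAt (A1 a c) (A2 a c η) η := by
  unfold A1 A2
  exact ((Real.hasDerivAt_cosh η).div_const a).sub
    (((Real.hasDerivAt_sinh η).div_const a).mul_const c)

lemma hasDerivAt_A2 (a c η : ℝ) : HasDerivAt (A2 a c) (A1 a c η) η := by
  unfold A1 A2
  exact ((Real.hasDerivAt_sinh η).div_const a).sub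
    (((Real.hasDerivAt_cosh η).div_const a).mul_const c)

lemma hasDerivAt_D1 (a η : ℝ) : HasDerivAt (D1 a) (D2 a η) η := by
  unfold D1 D2
  exact ((Real.hasDerivAt_cosh η).const_mul (2 / a)).add
    ((Real.hasDerivAt_sinh η).const_mul (2 / a ^ 2))

lemma hasDerivAt_D2 (a η : ℝ) : HasDerivAt (D2 a) (D1 a η) η := by
  unfold D1 D2
  exact ((Real.hasDerivAt_sinh η).const_mul (2 / a)).add
    ((Real.hasDerivAt_cosh η).const_mul (2 / a ^ 2))

lemma hasDerivAt_G (a c η : ℝ) (hA : Af a c η ≠ 0) (hD : Df a η ≠ 0) :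
    HasDerivAt (G a c) (G1 a c η) η := by
  have h := (((((hasDerivAt_Af a c η).log hA).sub ((hasDerivAt_Df a η).log hD)).add
      ((hasDerivAt_id η).mul_const (3 / (2 * a)))).sub
      ((hasDerivAt_pow 2 η).div_const (2 * a ^ 2))).sub
      ((hasDerivAt_id η).mul
        (((Real.hasDerivAt_cosh η).sub ((Real.hasDerivAt_sinh η).mul_const c)).div_const (2 * a)))
  refine h.congr_deriv ?_
  unfold G1
  simp only [id_eq, Pi.sub_apply]
  push_cast
  ring

lemma hasDerivAt_G1 (a c η : ℝ) (hA : Af a c η ≠ 0) (hD : Df a η ≠ 0) :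
    HasDerivAt (G1 a c) (G2 a c η) η := by
  have h := (((((hasDerivAt_A1 a c η).div (hasDerivAt_Af a c η) hA).sub
      ((hasDerivAt_D1 a η).div (hasDerivAt_Df a η) hD)).add_const (3 / (2 * a))).sub
      ((hasDerivAt_id η).div_const (a ^ 2))).sub
      (((((Real.hasDerivAt_cosh η).sub ((Real.hasDerivAt_sinh η).mul_const c)).div_const
          (2 * a))).add
        ((hasDerivAt_id η).mul
          (((Real.hasDerivAt_sinh η).sub ((Real.hasDerivAt_cosh η).mul_const c)).div_const
            (2 * a))))
  refine h.congr_deriv ?_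
  unfold G2
  simp only [id_eq, Pi.sub_apply]
  ring

lemma diff_G2 (a c : ℝ) (hA : Af a c 0 ≠ 0) (hD : Df a 0 ≠ 0) :
    DifferentiableAt ℝ (G2 a c) 0 := by
  have h := (((((hasDerivAt_A2 a c 0).mul (hasDerivAt_Af a c 0)).sub
      ((hasDerivAt_A1 a c 0).pow 2)).div ((hasDerivAt_Af a c 0).pow 2) (pow_ne_zero 2 hA)).sub
      ((((hasDerivAt_D2 a 0).mul (hasDerivAt_Df a 0)).sub ((hasDerivAt_D1 a 0).pow 2)).div
        ((hasDerivAt_Df a 0).pow 2) (pow_ne_zero 2 hD))).sub_const (1 / a ^ 2) |>.sub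
      (((((Real.hasDerivAt_sinh 0).sub ((Real.hasDerivAt_cosh 0).mul_const c)).div_const
          (2 * a))).add
        (((((Real.hasDerivAt_sinh 0).sub ((Real.hasDerivAt_cosh 0).mul_const c)).div_const
            (2 * a))).add
          ((hasDerivAt_id 0).mul
            (((Real.hasDerivAt_cosh 0).sub ((Real.hasDerivAt_sinh 0).mul_const c)).div_const
              (2 * a)))))
  exact h.differentiableAt

end Stmt19Aux

open Stmt19Aux in
theorem stmt_19 (a c : ℝ) (ha : 0 < a) (hc : c ∈ Set.Icc (-1 : ℝ) 1)
    (g f : ℝ → ℝ)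
    (hg : ∀ t : ℝ, g t =
      Real.log ((1 + Real.sinh (a * t) / a) - ((Real.cosh (a * t) - 1) / a) * c) -
      Real.log (1 + (2 / a) * Real.sinh (a * t) + (2 / a ^ 2) * (Real.cosh (a * t) - 1)))
    (hf : ∀ η : ℝ, η ≠ 0 → f η = g (η / a) / η) :
    (fun η : ℝ => f η + 3 / (2 * a) - η / (2 * a ^ 2) -
        (1 / (2 * a)) * (Real.cosh η - Real.sinh η * c))
      =O[nhdsWithin 0 {(0 : ℝ)}ᶜ] fun η : ℝ => η ^ 2 := by
  have hane : a ≠ 0 := ha.ne'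
  have hA0 : Af a c 0 = 1 := by simp [Af]
  have hD0 : Df a 0 = 1 := by simp [Df]
  have hA0' : Af a c 0 ≠ 0 := by rw [hA0]; norm_num
  have hD0' : Df a 0 ≠ 0 := by rw [hD0]; norm_num
  have hG0 : G a c 0 = 0 := by simp [G, hA0, hD0]
  have hG10 : G1 a c 0 = 0 := by
    simp only [G1, A1, D1, hA0, hD0, Real.cosh_zero, Real.sinh_zero]
    field_simp
    ring
  have hG20 : G2 a c 0 = 0 := by
    simp only [G2, A1, A2, D1, D2, hA0, hD0, Real.cosh_zero, Real.sinh_zero]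
    field_simp
    ring
  have hAev : ∀ᶠ η in 𝓝 (0 : ℝ), Af a c η ≠ 0 :=
    (hasDerivAt_Af a c 0).continuousAt.eventually_ne hA0'
  have hDev : ∀ᶠ η in 𝓝 (0 : ℝ), Df a η ≠ 0 :=
    (hasDerivAt_Df a 0).continuousAt.eventually_ne hD0'
  have hGder : ∀ᶠ η in 𝓝 (0 : ℝ), HasDerivAt (G a c) (G1 a c η) η := by
    filter_upwards [hAev, hDev] with η h1 h2 using hasDerivAt_G a c η h1 h2
  have hG1der : ∀ᶠ η in 𝓝 (0 : ℝ), HasDerivAt (G1 a c) (G2 a c η) η := by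
    filter_upwards [hAev, hDev] with η h1 h2 using hasDerivAt_G1 a c η h1 h2
  have hne : ∀ᶠ η in 𝓝[≠] (0 : ℝ), η ≠ 0 := by
    filter_upwards [self_mem_nhdsWithin] with η hη using hη
  set L := deriv (G2 a c) 0 with hL
  have hder : HasDerivAt (G2 a c) L 0 := (diff_G2 a c hA0' hD0').hasDerivAt
  have T3 : Tendsto (fun η => G2 a c η / η) (𝓝[≠] (0 : ℝ)) (𝓝 L) := by
    have h := hasDerivAt_iff_tendsto_slope.mp hder
    refine h.congr fun η => ?_
    rw [slope_def_field, hG20, sub_zero, sub_zero]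
  have T2 : Tendsto (fun η => G1 a c η / (3 * η ^ 2)) (𝓝[≠] (0 : ℝ)) (𝓝 (L / 6)) := by
    apply HasDerivAt.lhopital_zero_nhdsNE
    · exact hG1der.filter_mono nhdsWithin_le_nhds
    · refine Eventually.of_forall fun η => ?_
      have h := (hasDerivAt_pow 2 η).const_mul (3 : ℝ)
      convert h using 1
    · filter_upwards [hne] with η hη
      positivity
    · have hc1 : ContinuousAt (G1 a c) 0 := (hG1der.self_of_nhds).continuousAt
      have := hc1.continuousWithinAt (s := {(0 : ℝ)}ᶜ)
      rw [ContinuousWithinAt, hG10] at this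
      exact this
    · have : Tendsto (fun η : ℝ => 3 * η ^ 2) (𝓝 0) (𝓝 (3 * 0 ^ 2)) := by
        exact (continuous_const.mul (continuous_pow 2)).tendsto 0
      simpa using this.mono_left nhdsWithin_le_nhds
    · refine (T3.div_const 6).congr fun η => ?_
      ring
  have T1 : Tendsto (fun η => G a c η / η ^ 3) (𝓝[≠] (0 : ℝ)) (𝓝 (L / 6)) := by
    apply HasDerivAt.lhopital_zero_nhdsNE
    · exact hGder.filter_mono nhdsWithin_le_nhds
    · refine Eventually.of_forall fun η => ?_
      have h := hasDerivAt_pow 3 η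
      convert h using 1
    · filter_upwards [hne] with η hη
      positivity
    · have hc1 : ContinuousAt (G a c) 0 := (hGder.self_of_nhds).continuousAt
      have := hc1.continuousWithinAt (s := {(0 : ℝ)}ᶜ)
      rw [ContinuousWithinAt, hG0] at this
      exact this
    · have : Tendsto (fun η : ℝ => η ^ 3) (𝓝 0) (𝓝 (0 ^ 3)) := (continuous_pow 3).tendsto 0
      simpa using this.mono_left nhdsWithin_le_nhds
    · exact T2
  have hbig : (fun η => G a c η / η ^ 3) =O[𝓝[≠] (0 : ℝ)] (fun _ => (1 : ℝ)) :=
    T1.isBigO_one ℝ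
  have hbig2 := hbig.mul (isBigO_refl (fun η : ℝ => η ^ 2) (𝓝[≠] (0 : ℝ)))
  refine hbig2.congr' ?_ ?_
  · filter_upwards [hne] with η hη
    rw [hf η hη, hg (η / a), show a * (η / a) = η by field_simp]
    unfold G Af Df
    field_simp
  · filter_upwards with η
    rw [one_mul]
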